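/- Fix integers 0 = s_1 < s_2 < ... < s_k, set S = {s_1,...,s_k} and s̄ = s_k, and let n ≥ 2s̄. Let T be a legal cover of L_n and let S' ⊆ New(n) be such that T ∪ S' is a legal cover of L_{n+1}. Then the number of indices 0 ≤ i < s̄ with R^{T∪S'}(i) = 0 equals the number of indices 0 ≤ i < s̄ with R^T(i) = 0; that is, adding New-edges preserves the number of zeros in the right classification. -/

import Mathlib

/-- The number of edges of `T` ending at vertex `v`. -/
def indeg (T : Finset (ℕ × ℕ)) (v : ℕ) : ℕ := (T.filter fun e => e.2 = v).card

/-- The number of edges of `T` starting at vertex `v`. -/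
def outdeg (T : Finset (ℕ × ℕ)) (v : ℕ) : ℕ := (T.filter fun e => e.1 = v).card

/-- Edge set of the directed circulant graph `C_n` with jump set `S`:
edges `(i,j)` with `i, j ∈ {0,…,n−1}` and `(j − i) mod n ∈ S`. -/
def ECirc (S : Finset ℕ) (n : ℕ) : Finset (ℕ × ℕ) :=
  (Finset.range n ×ˢ Finset.range n).filter fun e => (e.2 + n - e.1) % n ∈ S

/-- Edge set of the lattice graph `L_n` with jump set `S`:
edges `(i,j)` with `i, j ∈ {0,…,n−1}` and `j − i ∈ S`. -/
def ELat (S : Finset ℕ) (n : ℕ) : Finset (ℕ × ℕ) :=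
  (Finset.range n ×ˢ Finset.range n).filter fun e => e.1 ≤ e.2 ∧ e.2 - e.1 ∈ S

/-- `Hook(n) = E_C(n) \ E_L(n)`. -/
def Hook (S : Finset ℕ) (n : ℕ) : Finset (ℕ × ℕ) := ECirc S n \ ELat S n

/-- `New(n) = E_L(n+1) \ E_L(n)`. -/
def NewE (S : Finset ℕ) (n : ℕ) : Finset (ℕ × ℕ) := ELat S (n + 1) \ ELat S n

/-- `T` is a cycle cover of `C_n`: `T ⊆ E_C(n)` and every vertex has in- and out-degree 1. -/
def CycleCover (S : Finset ℕ) (n : ℕ) (T : Finset (ℕ × ℕ)) : Prop :=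
  T ⊆ ECirc S n ∧ ∀ v < n, indeg T v = 1 ∧ outdeg T v = 1

/-- `T` is a legal cover of `L_n` (with `L(n) = {0,…,s̄−1}`, `R(n) = {n−s̄,…,n−1}`):
all in/out-degrees are at most 1, vertices outside `L(n)` have in-degree 1, and
vertices outside `R(n)` have out-degree 1. -/
def LegalCover (S : Finset ℕ) (sbar n : ℕ) (T : Finset (ℕ × ℕ)) : Prop :=
  T ⊆ ELat S n ∧ (∀ v < n, indeg T v ≤ 1 ∧ outdeg T v ≤ 1) ∧
    (∀ v < n, sbar ≤ v → indeg T v = 1) ∧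
    (∀ v < n, v < n - sbar → outdeg T v = 1)

/-- The classification `C(T) = (L^T, R^T)` of a legal cover of `L_n`, as a pair of binary
`s̄`-tuples: `L^T(i)` records whether `indeg_T(i) = 1` and `R^T(i)` whether
`outdeg_T(n−1−i) = 1`. -/
def classif (sbar n : ℕ) (T : Finset (ℕ × ℕ)) :
    (Fin sbar → Bool) × (Fin sbar → Bool) :=
  (fun i => decide (indeg T i.val = 1), fun i => decide (outdeg T (n - 1 - i.val) = 1))

lemma fin_filter_card (m : ℕ) (p : ℕ → Prop) [DecidablePred p] :
    (Finset.univ.filter fun i : Fin m => p i.val).card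
      = ((Finset.range m).filter p).card := by
  apply Finset.card_nbij (fun i => i.val)
  · intro i hi
    simp only [Finset.coe_filter, Finset.mem_filter, Finset.mem_univ, true_and, Set.mem_setOf_eq] at hi
    simp [Finset.mem_filter, Finset.mem_range, i.isLt, hi]
  · intro a _ b _ h
    exact Fin.ext h
  · intro b hb
    simp only [Finset.coe_filter, Finset.mem_range, Set.mem_setOf_eq, Finset.mem_univ,
      true_and, Set.mem_image] at hb ⊢
    exact ⟨⟨b, hb.1⟩, hb.2, rfl⟩

/-- Adding New-edges preserves the number of zeros in the right classification:
if `T` is a legal cover of `L_n` (`n ≥ 2s̄`) and `S' ⊆ New(n)` is such that `T ∪ S'` is a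
legal cover of `L_{n+1}`, then the number of indices `i < s̄` with
`R^{T∪S'}(i) = 0` (i.e. `outdeg_{T∪S'}((n+1)−1−i) = 0`) equals the number of indices
`i < s̄` with `R^T(i) = 0` (i.e. `outdeg_T(n−1−i) = 0`). -/
theorem new_edges_preserve_right_zero_count (S : Finset ℕ) (h0 : 0 ∈ S) (sbar : ℕ)
    (hsbar : sbar = S.max' ⟨0, h0⟩) (n : ℕ) (hn : 2 * sbar ≤ n)
    (T S' : Finset (ℕ × ℕ)) (hT : LegalCover S sbar n T) (hS' : S' ⊆ NewE S n)
    (hTS : LegalCover S sbar (n + 1) (T ∪ S')) :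
    (Finset.univ.filter fun i : Fin sbar => outdeg (T ∪ S') (n - i.val) = 0).card =
      (Finset.univ.filter fun i : Fin sbar => outdeg T (n - 1 - i.val) = 0).card := by
  classical
  rcases Nat.eq_zero_or_pos sbar with h0' | hpos
  · subst h0'; simp
  have hsn : sbar ≤ n := by omega
  have hdis : Disjoint T S' := by
    rw [Finset.disjoint_left]
    intro e heT heS'
    have h1 := hT.1 heT
    have h2 := hS' heS'
    simp only [NewE, Finset.mem_sdiff] at h2
    exact h2.2 h1
  have hend : ∀ e ∈ S', e.2 = n ∧ e.1 ≤ n ∧ n - e.1 ∈ S := by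
    intro e he
    have h2 := hS' he
    simp only [NewE, Finset.mem_sdiff, ELat, Finset.mem_filter, Finset.mem_product,
      Finset.mem_range] at h2
    obtain ⟨⟨⟨h1n, h2n⟩, hle, hmem⟩, hnot⟩ := h2
    have he2 : e.2 = n := by
      by_contra h
      exact hnot ⟨⟨by omega, by omega⟩, hle, hmem⟩
    exact ⟨he2, by omega, by rwa [← he2]⟩
  have hindegTn : indeg T n = 0 := by
    rw [indeg, Finset.card_eq_zero, Finset.filter_eq_empty_iff]
    intro e he
    have h1 := hT.1 he
    simp only [ELat, Finset.mem_filter, Finset.mem_product, Finset.mem_range] at h1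
    omega
  have houtTn : outdeg T n = 0 := by
    rw [outdeg, Finset.card_eq_zero, Finset.filter_eq_empty_iff]
    intro e he
    have h1 := hT.1 he
    simp only [ELat, Finset.mem_filter, Finset.mem_product, Finset.mem_range] at h1
    omega
  have hindegUnion : ∀ v, indeg (T ∪ S') v = indeg T v + indeg S' v := by
    intro v
    rw [indeg, indeg, indeg, Finset.filter_union,
      Finset.card_union_of_disjoint (Finset.disjoint_filter_filter hdis)]
  have houtUnion : ∀ v, outdeg (T ∪ S') v = outdeg T v + outdeg S' v := by
    intro v
    rw [outdeg, outdeg, outdeg, Finset.filter_union,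
      Finset.card_union_of_disjoint (Finset.disjoint_filter_filter hdis)]
  have hS'n : indeg S' n = 1 := by
    have h1 := hTS.2.2.1 n (by omega) hsn
    rw [hindegUnion] at h1
    omega
  have hScard : S'.card = 1 := by
    rw [indeg, Finset.filter_eq_self.mpr (fun e he => (hend e he).1)] at hS'n
    exact hS'n
  obtain ⟨e0, he0⟩ := Finset.card_eq_one.mp hScard
  have he0mem : e0 ∈ S' := he0 ▸ Finset.mem_singleton_self e0
  obtain ⟨he02, he01, hSmem⟩ := hend e0 he0mem
  set a := e0.1 with ha
  set s := n - a with hs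
  have hs_le : s ≤ sbar := by rw [hsbar]; exact Finset.le_max' S s hSmem
  have houtS' : ∀ v, outdeg S' v = if a = v then 1 else 0 := by
    intro v
    rw [he0, outdeg, Finset.filter_singleton]
    split <;> simp
  have hout : ∀ v, outdeg (T ∪ S') v = outdeg T v + (if a = v then 1 else 0) := by
    intro v; rw [houtUnion, houtS']
  have houtTa : outdeg T a = 0 := by
    have h1 := (hTS.2.1 a (by omega)).2
    rw [hout, if_pos rfl] at h1
    omega
  have hbound : s < sbar → outdeg T (n - sbar) = 1 := by
    intro hlt
    have h1 := hTS.2.2.2 (n - sbar) (by omega) (by omega)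
    rw [hout, if_neg (by omega)] at h1
    omega
  have e1 : (Finset.univ.filter fun i : Fin sbar => outdeg (T ∪ S') (n - i.val) = 0).card
      = ((Finset.range sbar).filter fun i => outdeg (T ∪ S') (n - i) = 0).card :=
    fin_filter_card sbar (fun v => outdeg (T ∪ S') (n - v) = 0)
  have e2 : (Finset.univ.filter fun i : Fin sbar => outdeg T (n - 1 - i.val) = 0).card
      = ((Finset.range sbar).filter fun i => outdeg T (n - 1 - i) = 0).card :=
    fin_filter_card sbar (fun v => outdeg T (n - 1 - v) = 0)
  rw [e1, e2]
  have hmemL : ∀ i, (i ∈ (Finset.range sbar).filter fun i => outdeg (T ∪ S') (n - i) = 0)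
      ↔ i < sbar ∧ outdeg T (n - i) = 0 ∧ i ≠ s := by
    intro i
    simp only [Finset.mem_filter, Finset.mem_range, hout]
    constructor
    · rintro ⟨h1, h2⟩
      split_ifs at h2 with h
      all_goals exact ⟨h1, by omega, by omega⟩
    · rintro ⟨h1, h2, h3⟩
      refine ⟨h1, ?_⟩
      rw [if_neg (by omega)]
      omega
  have hmemR : ∀ i, (i ∈ (Finset.range sbar).filter fun i => outdeg T (n - 1 - i) = 0)
      ↔ i < sbar ∧ outdeg T (n - 1 - i) = 0 := by
    intro i
    simp [Finset.mem_filter, Finset.mem_range]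
  apply Finset.card_bij (fun i _ => if i = 0 then s - 1 else i - 1)
  · intro i hi
    rw [hmemL] at hi
    obtain ⟨h1, h2, h3⟩ := hi
    rw [hmemR]
    by_cases h : i = 0
    · subst h
      rw [if_pos rfl]
      refine ⟨by omega, ?_⟩
      have heq : n - 1 - (s - 1) = a := by omega
      rw [heq]
      exact houtTa
    · rw [if_neg h]
      refine ⟨by omega, ?_⟩
      have heq : n - 1 - (i - 1) = n - i := by omega
      rw [heq]
      exact h2
  · intro i hi j hj hij
    rw [hmemL] at hi hj
    split_ifs at hij <;> omega
  · intro j hj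
    rw [hmemR] at hj
    obtain ⟨h1, h2⟩ := hj
    by_cases hcase : 1 ≤ s ∧ j = s - 1
    · refine ⟨0, ?_, ?_⟩
      · rw [hmemL]
        refine ⟨by omega, ?_, by omega⟩
        simpa using houtTn
      · rw [if_pos rfl]; omega
    · have hjlt : j + 1 < sbar := by
        by_contra hc
        have hj' : j = sbar - 1 := by omega
        have hslt : s < sbar := by omega
        have hb := hbound hslt
        have heq : n - 1 - j = n - sbar := by omega
        rw [heq] at h2
        omega
      refine ⟨j + 1, ?_, ?_⟩
      · rw [hmemL]
        refine ⟨hjlt, ?_, by omega⟩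
        have heq : n - (j + 1) = n - 1 - j := by omega
        rw [heq]
        exact h2
      · rw [if_neg (by omega)]
        omega
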